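/- Let E be a directed graph and G_E its graph groupoid. The unit space G_E⁰ (the boundary path space X) is finite if and only if E is a finite graph in which no cycle has an exit. -/

import Mathlib

open Set

section Graph

variable {V E : Type*} (gs gr : E → V)

/-- `(v, l)` is a finite path of the directed graph with source map `gs` and range map
`gr`: the edges of `l` compose (`gr eᵢ = gs eᵢ₊₁`) and start at `v` (`l = []` gives the
path of length zero at `v`). -/
def IsPathL (v : V) (l : List E) : Prop :=
  (∀ e ∈ l.head?, gs e = v) ∧ l.Chain' fun a b => gr a = gs b

/-- The range vertex of the finite path `(v, l)`. -/
def pathRng (v : V) (l : List E) : V := l.foldl (fun _ e => gr e) v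

/-- A vertex is regular if it emits at least one and at most finitely many edges. -/
def RegularVert (v : V) : Prop :=
  {e : E | gs e = v}.Finite ∧ {e : E | gs e = v}.Nonempty

/-- A boundary path: either a finite path whose range is not a regular vertex, or an
infinite path (an infinite composable sequence of edges). -/
def IsBoundary : (V × List E) ⊕ (ℕ → E) → Prop
  | .inl (v, l) => IsPathL gs gr v l ∧ ¬ RegularVert gs (pathRng gr v l)
  | .inr f => ∀ n, gr (f n) = gs (f (n + 1))

/-- The boundary path space `X` of the graph: the unit space of the graph groupoid. -/
def BPath := {x : (V × List E) ⊕ (ℕ → E) // IsBoundary gs gr x}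

/-- The boundary path `x` starts with the finite path `(w, m)`. -/
def HasPrefixP (w : V) (m : List E) (x : BPath gs gr) : Prop :=
  match x.1 with
  | .inl (v, l) => v = w ∧ m <+: l
  | .inr f => (m = [] → gs (f 0) = w) ∧ (∀ e ∈ m.head?, gs e = w) ∧
      ∀ (i : ℕ) (h : i < m.length), f i = m.get ⟨i, h⟩

/-- The cylinder set `Z(μ) = {μ x : x ∈ X}` of a finite path `μ = (w, m)`. -/
def ZP (w : V) (m : List E) : Set (BPath gs gr) := {x | HasPrefixP gs gr w m x}

/-- The topology on the boundary path space `X = G_E⁰`, with basic compact open sets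
`Z(μ∖F) = Z(μ) ∖ ⋃_{e ∈ F} Z(μe)` for finite sets `F` of edges with source `r(μ)`. -/
def unitTop : TopologicalSpace (BPath gs gr) :=
  TopologicalSpace.generateFrom
    {A | ∃ (w : V) (m : List E) (F : Set E), F.Finite ∧ IsPathL gs gr w m ∧
      (∀ e ∈ F, gs e = pathRng gr w m) ∧
      A = ZP gs gr w m \ ⋃ e ∈ F, ZP gs gr w (m ++ [e])}

/-- `x` and `y` have a common tail: removing the first `m` edges of `x` and the first
`n` edges of `y` yields the same boundary path. -/
def AgreeFrom (m n : ℕ) (x y : BPath gs gr) : Prop :=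
  match x.1, y.1 with
  | .inl (v, l), .inl (w, t) =>
      m ≤ l.length ∧ n ≤ t.length ∧
      pathRng gr v (l.take m) = pathRng gr w (t.take n) ∧ l.drop m = t.drop n
  | .inr f, .inr g => ∀ i : ℕ, f (m + i) = g (n + i)
  | _, _ => False

/-- The graph groupoid `G_E = {(αx, |α| − |β|, βx)}`, as triples `(x, k, y)` of
boundary paths `x, y` having a common tail, with `k` the difference of the lengths of
the removed prefixes.  Here `r (x,k,y) = x` and `d (x,k,y) = y`; composition is
`(x,k,y)(y,l,z) = (x,k+l,z)` and inversion `(x,k,y)⁻¹ = (y,−k,x)`. -/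
def GrGpd := {γ : BPath gs gr × ℤ × BPath gs gr //
  ∃ m n : ℕ, AgreeFrom gs gr m n γ.1 γ.2.2 ∧ γ.2.1 = (m : ℤ) - (n : ℤ)}

/-- The basic bisection `Z(μ, ν) = {(μz, |μ|−|ν|, νz)}` of the graph groupoid. -/
def ZZ (u : V) (p : List E) (w : V) (q : List E) : Set (GrGpd gs gr) :=
  {γ | HasPrefixP gs gr u p γ.1.1 ∧ HasPrefixP gs gr w q γ.1.2.2 ∧
    γ.1.2.1 = (p.length : ℤ) - (q.length : ℤ) ∧
    AgreeFrom gs gr p.length q.length γ.1.1 γ.1.2.2}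

/-- The topology of the graph groupoid `G_E`, with basic compact open bisections
`Z((μ,ν)∖F) = Z(μ,ν) ∖ ⋃_{α ∈ F} Z(μα, να)`, making it a Hausdorff ample groupoid. -/
def gpdTop : TopologicalSpace (GrGpd gs gr) :=
  TopologicalSpace.generateFrom
    {A | ∃ (u : V) (p : List E) (w : V) (q : List E) (F : Set (List E)), F.Finite ∧
      IsPathL gs gr u p ∧ IsPathL gs gr w q ∧ pathRng gr u p = pathRng gr w q ∧
      (∀ α ∈ F, IsPathL gs gr (pathRng gr u p) α) ∧
      A = ZZ gs gr u p w q \ ⋃ α ∈ F, ZZ gs gr u (p ++ α) w (q ++ α)}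

/-- A cycle: a nonempty closed path whose edges have pairwise distinct sources. -/
def IsCycleP (v : V) (l : List E) : Prop :=
  IsPathL gs gr v l ∧ l ≠ [] ∧ pathRng gr v l = v ∧ (l.map gs).Nodup

/-- The path `l` has an exit: some edge `e` shares its source with an edge of `l` but
differs from it. -/
def HasExitP (l : List E) : Prop := ∃ e a : E, a ∈ l ∧ gs e = gs a ∧ e ≠ a

end Graph

namespace BPF
section Part12
variable {V E : Type*} {gs gr : E → V}

lemma pathRng_append (v : V) (p q : List E) :
    pathRng gr v (p ++ q) = pathRng gr (pathRng gr v p) q :=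
  List.foldl_append

lemma pathRng_ne_nil (v : V) {l : List E} (h : l ≠ []) :
    pathRng gr v l = gr (l.getLast h) := by
  rcases List.eq_nil_or_concat l with rfl | ⟨L, b, rfl⟩
  · exact absurd rfl h
  · simp [pathRng, List.foldl_append]

lemma pathRng_congr {l : List E} (h : l ≠ []) (v w : V) :
    pathRng gr v l = pathRng gr w l := by
  rw [pathRng_ne_nil v h, pathRng_ne_nil w h]

lemma isPathL_cons {v : V} {e : E} {l : List E} :
    IsPathL gs gr v (e :: l) ↔ gs e = v ∧ IsPathL gs gr (gr e) l := by
  constructor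
  · rintro ⟨h1, h2⟩
    replace h2 := List.isChain_cons.mp h2
    exact ⟨h1 e rfl, fun x hx => (h2.1 x hx).symm, h2.2⟩
  · rintro ⟨h1, h2, h3⟩
    refine ⟨by simpa using h1, List.isChain_cons.mpr ⟨fun x hx => (h2 x hx).symm, h3⟩⟩

lemma path_rel {v : V} {l : List E} (h : IsPathL gs gr v l) {i : ℕ}
    (hi : i + 1 < l.length) : gr (l[i]'(by omega)) = gs (l[i+1]'hi) := by
  have := (List.isChain_iff_getElem.mp h.2) i (by omega)
  simpa using this

lemma path_append {v : V} {p q : List E} (hp : IsPathL gs gr v p)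
    (hq : IsPathL gs gr (pathRng gr v p) q) : IsPathL gs gr v (p ++ q) := by
  rcases eq_or_ne p [] with rfl | hne
  · simpa [IsPathL, pathRng] using hq
  refine ⟨?_, List.isChain_append.mpr ⟨hp.2, hq.2, ?_⟩⟩
  · intro x hx
    rw [List.head?_append_of_ne_nil _ hne] at hx
    exact hp.1 x hx
  · intro x hx y hy
    rw [List.getLast?_eq_getLast hne] at hx
    obtain rfl : p.getLast hne = x := by simpa using hx
    have : pathRng gr v p = gr (p.getLast hne) := pathRng_ne_nil v hne
    rw [← this]
    exact (hq.1 y hy).symm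

lemma path_prefix {v : V} {p q : List E} (h : IsPathL gs gr v q) (hpq : p <+: q) :
    IsPathL gs gr v p := by
  obtain ⟨t, rfl⟩ := hpq
  rcases eq_or_ne p [] with rfl | hne
  · exact ⟨by simp, List.isChain_nil⟩
  refine ⟨?_, h.2.prefix ⟨t, rfl⟩⟩
  intro x hx
  exact h.1 x (by rwa [List.head?_append_of_ne_nil _ hne])

lemma path_suffix_cons {a : E} {l₁ l₂ : List E} {v : V}
    (h : IsPathL gs gr v (l₁ ++ a :: l₂)) : IsPathL gs gr (gs a) (a :: l₂) :=
  ⟨by simp, h.2.suffix ⟨l₁, rfl⟩⟩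


lemma exists_dup {α : Type*} {l : List α} (h : ¬ l.Nodup) :
    ∃ i j, ∃ (hij : i < j) (hj : j < l.length), l[i]'(by omega) = l[j]'hj := by
  rw [List.nodup_iff_injective_get, Function.not_injective_iff] at h
  obtain ⟨a, b, hab, hne⟩ := h
  rcases lt_or_gt_of_ne (Fin.val_ne_of_ne hne) with h' | h'
  · exact ⟨a, b, h', b.2, by simpa [List.get_eq_getElem] using hab⟩
  · exact ⟨b, a, h', a.2, by simpa [List.get_eq_getElem] using hab.symm⟩

variable (gs gr) in
def OnCyc (v : V) : Prop := ∃ w l, IsCycleP gs gr w l ∧ v ∈ l.map gs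

variable (hE : ∀ (v : V) (l : List E), IsCycleP gs gr v l → ¬ HasExitP gs l)
include hE

lemma onCyc_uniq {v : V} (h : OnCyc gs gr v) {e e' : E} (he : gs e = v)
    (he' : gs e' = v) : e = e' := by
  obtain ⟨w, l, hc, hm⟩ := h
  obtain ⟨a, ha, hav⟩ := List.mem_map.mp hm
  by_contra hne
  rcases eq_or_ne e a with rfl | hea
  · exact hE w l hc ⟨e', e, ha, he'.trans hav.symm, fun h => hne h.symm⟩
  · exact hE w l hc ⟨e, a, ha, he.trans hav.symm, hea⟩

omit hE in
lemma onCyc_exists_edge {v : V} (h : OnCyc gs gr v) : ∃ e, gs e = v := by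
  obtain ⟨w, l, hc, hm⟩ := h
  obtain ⟨a, _, hav⟩ := List.mem_map.mp hm
  exact ⟨a, hav⟩

omit hE in
lemma cyc_next {w : V} {l : List E} (hc : IsCycleP gs gr w l) {a : E} (ha : a ∈ l) :
    gr a ∈ l.map gs := by
  obtain ⟨s, t, rfl⟩ := List.append_of_mem ha
  cases t with
  | cons b t' =>
    have : List.Chain' (fun a b => gr a = gs b) (a :: b :: t') :=
      hc.1.2.suffix ⟨s, rfl⟩
    replace this := List.isChain_cons_cons.mp this
    exact List.mem_map.mpr ⟨b, by simp, this.1.symm⟩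
  | nil =>
    have hne : s ++ [a] ≠ [] := by simp
    have h1 : pathRng gr w (s ++ [a]) = gr a := by
      simp [pathRng, List.foldl_append]
    have h2 : gr a = w := h1.symm.trans hc.2.2.1
    have h3 : gs ((s ++ [a]).head hne) = w := hc.1.1 _ (List.head?_eq_head hne)
    exact List.mem_map.mpr ⟨(s ++ [a]).head hne, List.head_mem hne, h3.trans h2.symm⟩

lemma onCyc_step {e : E} (h : OnCyc gs gr (gs e)) : OnCyc gs gr (gr e) := by
  obtain ⟨w, l, hc, hm⟩ := h
  obtain ⟨a, ha, hav⟩ := List.mem_map.mp hm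
  have : e = a := onCyc_uniq hE ⟨w, l, hc, hm⟩ rfl hav
  subst this
  exact ⟨w, l, hc, cyc_next hc ha⟩

omit hE in
lemma getElem_congr' {α : Type*} {l : List α} {a b : ℕ} (h : a = b)
    (ha : a < l.length) : l[a]'ha = l[b]'(h ▸ ha) := by subst h; rfl

lemma seg_onCyc : ∀ (N : ℕ) (l : List E) (v : V) (i j : ℕ) (hij : i < j)
    (hj : j < l.length), j - i ≤ N → IsPathL gs gr v l →
    gs (l[i]'(by omega)) = gs (l[j]'hj) → ∃ a ∈ l, OnCyc gs gr (gs a) := by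
  intro N
  induction N with
  | zero => intro l v i j hij hj hN; omega
  | succ N ih =>
    intro l v i j hij hj hN hp heq
    set m : List E := (l.drop i).take (j - i) with hm
    have hlen : m.length = j - i := by simp [hm]; omega
    have hmne : m ≠ [] := by
      intro h; rw [h] at hlen; simp at hlen; omega
    have hget : ∀ t (ht : t < j - i), m[t]'(by omega) = l[i+t]'(by omega) := by
      intro t ht
      simp [hm, List.getElem_take, List.getElem_drop]
    have hminf : m <:+: l := ((l.drop i).take_prefix _).isInfix.trans (l.drop_suffix i).isInfix
    by_cases hnd : (m.map gs).Nodup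
    · -- m is a cycle
      have hm0 : m[0]'(by omega) = l[i]'(by omega) := by simpa using hget 0 (by omega)
      have hpath : IsPathL gs gr (gs (l[i]'(by omega))) m := by
        refine ⟨?_, hp.2.infix hminf⟩
        intro x hx
        rw [List.head?_eq_head hmne] at hx
        obtain rfl : m.head hmne = x := by simpa using hx
        rw [← List.getElem_zero (by omega), hm0]
      have hclosed : pathRng gr (gs (l[i]'(by omega))) m = gs (l[i]'(by omega)) := by
        rw [pathRng_ne_nil _ hmne, List.getLast_eq_getElem]
        have h1 : m[m.length - 1]'(by omega) = l[j-1]'(by omega) := by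
          have h2 := hget (m.length - 1) (by omega)
          rw [h2]
          exact getElem_congr' (by omega) _
        rw [h1]
        have h3 := path_rel hp (i := j - 1) (by omega)
        have h4 : l[j-1+1]'(by omega) = l[j]'(by omega) :=
          getElem_congr' (by omega) _
        rw [h4] at h3
        rw [h3, ← heq]
      have hcyc : IsCycleP gs gr (gs (l[i]'(by omega))) m := ⟨hpath, hmne, hclosed, hnd⟩
      refine ⟨l[i]'(by omega), List.getElem_mem _, ?_⟩
      exact ⟨_, m, hcyc, List.mem_map.mpr ⟨m[0]'(by omega), List.getElem_mem _, by rw [hm0]⟩⟩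
    · obtain ⟨i', j', hlt', hj', heq'⟩ := exists_dup hnd
      rw [List.length_map, hlen] at hj'
      have e1 : (m.map gs)[i']'(by simp; omega) = gs (l[i+i']'(by omega)) := by
        rw [List.getElem_map, hget i' (by omega)]
      have e2 : (m.map gs)[j']'(by simp; omega) = gs (l[i+j']'(by omega)) := by
        rw [List.getElem_map, hget j' (by omega)]
      exact ih l v (i+i') (i+j') (by omega) (by omega) (by omega) hp
        (by rw [← e1, ← e2]; exact heq')

lemma onCyc_pathRng' : ∀ (l : List E) (v : V), IsPathL gs gr v l → OnCyc gs gr v →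
    OnCyc gs gr (pathRng gr v l) := by
  intro l
  induction l with
  | nil => intro v _ hv; simpa [pathRng] using hv
  | cons e t ih =>
    intro v hp hv
    rw [isPathL_cons] at hp
    have : OnCyc gs gr (gr e) := onCyc_step hE (hp.1 ▸ hv)
    exact ih (gr e) hp.2 this

lemma onCyc_pathRng {v : V} {l : List E} (h : IsPathL gs gr v l) {a : E} (ha : a ∈ l)
    (hc : OnCyc gs gr (gs a)) : OnCyc gs gr (pathRng gr v l) := by
  obtain ⟨s, t, rfl⟩ := List.append_of_mem ha
  rw [pathRng_append, pathRng_congr (by simp) _ (gs a)]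
  exact onCyc_pathRng' hE _ _ (path_suffix_cons h) hc


end Part12

section Part3
variable {V E : Type*} {gs gr : E → V}
variable (hE : ∀ (v : V) (l : List E), IsCycleP gs gr v l → ¬ HasExitP gs l)
include hE

lemma bpath_nodup [Finite E] {v : V} {l : List E}
    (hb : IsBoundary gs gr (.inl (v, l))) : l.Nodup := by
  have hb' : IsPathL gs gr v l ∧ ¬ RegularVert gs (pathRng gr v l) := hb
  by_contra hnd
  obtain ⟨i, j, hij, hj, heq⟩ := exists_dup hnd
  obtain ⟨a, ha, hc⟩ := seg_onCyc hE (j - i) l v i j hij hj le_rfl hb'.1 (by rw [heq])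
  have h2 := onCyc_pathRng hE hb'.1 ha hc
  exact hb'.2 ⟨Set.toFinite _, onCyc_exists_edge h2⟩

lemma forced {f g : ℕ → E} (hf : ∀ n, gr (f n) = gs (f (n+1)))
    (hg : ∀ n, gr (g n) = gs (g (n+1))) {t : ℕ} (hc : OnCyc gs gr (gs (f t)))
    (ht : f t = g t) : ∀ d, f (t + d) = g (t + d) := by
  have key : ∀ d, f (t + d) = g (t + d) ∧ OnCyc gs gr (gs (f (t + d))) := by
    intro d
    induction d with
    | zero => exact ⟨ht, hc⟩
    | succ d ih =>
      have h1 : OnCyc gs gr (gr (f (t + d))) := onCyc_step hE ih.2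
      have h2 : gs (f (t + d + 1)) = gr (f (t + d)) := (hf (t + d)).symm
      have h3 : gs (g (t + d + 1)) = gr (f (t + d)) := by rw [ih.1]; exact (hg (t + d)).symm
      refine ⟨?_, ?_⟩
      · show f (t + d + 1) = g (t + d + 1)
        exact onCyc_uniq hE h1 h2 h3
      · show OnCyc gs gr (gs (f (t + d + 1)))
        rw [h2]; exact h1
  exact fun d => (key d).1

lemma inf_eq [Finite E] {f g : ℕ → E} (hf : ∀ n, gr (f n) = gs (f (n+1)))
    (hg : ∀ n, gr (g n) = gs (g (n+1))) (hagree : ∀ n ≤ Nat.card E, f n = g n) :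
    f = g := by
  have hft := Fintype.ofFinite E
  obtain ⟨i, j, hij, hjN, hfij⟩ : ∃ i j, i < j ∧ j ≤ Nat.card E ∧ f i = f j := by
    have hcard : Fintype.card E < Fintype.card (Fin (Nat.card E + 1)) := by
      simp [Nat.card_eq_fintype_card]
    obtain ⟨a, b, hne, heq⟩ :=
      Fintype.exists_ne_map_eq_of_card_lt (fun i : Fin (Nat.card E + 1) => f i.1) hcard
    rcases lt_or_gt_of_ne (Fin.val_ne_of_ne hne) with h' | h'
    · exact ⟨a.1, b.1, h', by omega, heq⟩
    · exact ⟨b.1, a.1, h', by omega, heq.symm⟩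
  set l : List E := List.ofFn (fun t : Fin (j+1) => f t.1) with hl
  have hlen : l.length = j + 1 := by simp [hl]
  have hget : ∀ t (ht : t < j + 1), l[t]'(by omega) = f t := by
    intro t ht; simp only [hl, List.getElem_ofFn]
  have hlne : l ≠ [] := by
    intro h; rw [h] at hlen; simp at hlen
  have hpath : IsPathL gs gr (gs (f 0)) l := by
    refine ⟨?_, ?_⟩
    · intro x hx
      rw [List.head?_eq_head hlne] at hx
      obtain rfl : l.head hlne = x := by simpa using hx
      rw [← List.getElem_zero (by omega), hget 0 (by omega)]
    · refine List.isChain_iff_getElem.mpr ?_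
      intro t ht
      rw [hlen] at ht
      rw [hget t (by omega), hget (t+1) (by omega)]
      exact hf t
  obtain ⟨a, ha, hc⟩ := seg_onCyc hE (j - i) l (gs (f 0)) i j hij (by omega) le_rfl hpath
    (by rw [hget i (by omega), hget j (by omega), hfij])
  obtain ⟨t, hta⟩ := List.mem_ofFn.mp (hl ▸ ha)
  have htc : OnCyc gs gr (gs (f t.1)) := by
    rw [show f t.1 = a from hta]
    exact hc
  have hforced := forced hE hf hg htc (hagree t.1 (by omega))
  funext n
  rcases le_or_gt n (Nat.card E) with h | h
  · exact hagree n h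
  · have : n = t.1 + (n - t.1) := by omega
    rw [this]
    exact hforced (n - t.1)

lemma bpath_finite [Finite V] [Finite E] : Finite (BPath gs gr) := by
  have hft := Fintype.ofFinite E
  set N := Nat.card E with hN
  have hNc : N = Fintype.card E := Nat.card_eq_fintype_card
  let Φ : BPath gs gr → (V × (Fin (N+1) → Option E)) ⊕ (Fin (N+1) → E) := fun x =>
    match x.1 with
    | .inl (v, l) => .inl (v, fun i => l[i.1]?)
    | .inr f => .inr (fun i => f i.1)
  have hinj : Function.Injective Φ := by
    rintro ⟨x1, hx⟩ ⟨y1, hy⟩ hxy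
    rcases x1 with ⟨v, l⟩ | f <;> rcases y1 with ⟨w, m⟩ | g
    · simp only [Φ, Sum.inl.injEq, Prod.mk.injEq] at hxy
      obtain ⟨rfl, hfun⟩ := hxy
      have hlenl : l.length ≤ N := by
        rw [hNc]; exact (bpath_nodup hE hx).length_le_card
      have hlenm : m.length ≤ N := by
        rw [hNc]; exact (bpath_nodup hE hy).length_le_card
      have : l = m := by
        apply List.ext_getElem?
        intro n
        rcases le_or_gt n N with h | h
        · exact congrFun hfun ⟨n, by omega⟩
        · rw [List.getElem?_eq_none (by omega), List.getElem?_eq_none (by omega)]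
      subst this
      rfl
    · simp [Φ] at hxy
    · simp [Φ] at hxy
    · simp only [Φ, Sum.inr.injEq] at hxy
      have : f = g := inf_eq hE hx hy (fun n hn => congrFun hxy ⟨n, by omega⟩)
      subst this
      rfl
  exact Finite.of_injective Φ hinj

end Part3

section Part4
variable {V E : Type*} (gs gr : E → V)

def srcB : BPath gs gr → V := fun x =>
  match x.1 with
  | .inl (w, _) => w
  | .inr f => gs (f 0)

def edgeAt (k : ℕ) : BPath gs gr → Option E := fun x =>
  match x.1 with
  | .inl (_, l) => l[k]?
  | .inr f => some (f k)

open Classical in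
noncomputable def nxt (v : V) : Option E :=
  if h : RegularVert gs v then some h.2.some else none

noncomputable def vtx (v : V) : ℕ → V
  | 0 => v
  | n+1 =>
    match nxt gs (vtx v n) with
    | some e => gr e
    | none => vtx v n

variable {gs gr}

lemma nxt_some {v : V} {e : E} (h : nxt gs v = some e) : gs e = v := by
  unfold nxt at h
  split at h
  · next hreg => cases h; exact hreg.2.some_mem
  · cases h

lemma nxt_none {v : V} (h : nxt gs v = none) : ¬ RegularVert gs v := by
  unfold nxt at h
  split at h
  · cases h
  · assumption

lemma vtx_succ_some {v : V} {n : ℕ} {e : E} (h : nxt gs (vtx gs gr v n) = some e) :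
    vtx gs gr v (n + 1) = gr e := by
  show (match nxt gs (vtx gs gr v n) with
    | some e => gr e
    | none => vtx gs gr v n) = gr e
  rw [h]

lemma exists_bpath (v : V) : ∃ x : BPath gs gr, srcB gs gr x = v := by
  classical
  by_cases h : ∀ n, (nxt gs (vtx gs gr v n)).isSome
  · set f : ℕ → E := fun n => (nxt gs (vtx gs gr v n)).get (h n) with hf
    have hsome : ∀ n, nxt gs (vtx gs gr v n) = some (f n) :=
      fun n => (Option.some_get (h n)).symm
    have hgs : ∀ n, gs (f n) = vtx gs gr v n := fun n => nxt_some (hsome n)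
    have hgr : ∀ n, gr (f n) = vtx gs gr v (n + 1) :=
      fun n => (vtx_succ_some (hsome n)).symm
    have hbd : IsBoundary gs gr (.inr f) := by
      intro n
      rw [hgr n, hgs (n + 1)]
    exact ⟨⟨.inr f, hbd⟩, by show gs (f 0) = v; rw [hgs 0]; simp [vtx]⟩
  · push_neg at h
    have hex : ∃ n, nxt gs (vtx gs gr v n) = none := by
      obtain ⟨n, hn⟩ := h
      exact ⟨n, Option.not_isSome_iff_eq_none.mp (by simpa using hn)⟩
    set n₀ := Nat.find hex with hn₀
    have hspec : nxt gs (vtx gs gr v n₀) = none := Nat.find_spec hex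
    have hks : ∀ k, k < n₀ → (nxt gs (vtx gs gr v k)).isSome :=
      fun k hk => Option.ne_none_iff_isSome.mp (Nat.find_min hex hk)
    set l : List E := List.ofFn (fun i : Fin n₀ => (nxt gs (vtx gs gr v i.1)).get (hks i.1 i.2))
      with hl
    have hlen : l.length = n₀ := by simp [hl]
    have hget : ∀ t (ht : t < n₀),
        l[t]'(by omega) = (nxt gs (vtx gs gr v t)).get (hks t ht) := by
      intro t ht
      simp only [hl, List.getElem_ofFn]
    have hsome : ∀ t (ht : t < n₀), nxt gs (vtx gs gr v t) = some (l[t]'(by omega)) := by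
      intro t ht
      rw [hget t ht]
      exact (Option.some_get _).symm
    have hgs : ∀ t (ht : t < n₀), gs (l[t]'(by omega)) = vtx gs gr v t :=
      fun t ht => nxt_some (hsome t ht)
    have hgr : ∀ t (ht : t < n₀), gr (l[t]'(by omega)) = vtx gs gr v (t + 1) :=
      fun t ht => (vtx_succ_some (hsome t ht)).symm
    have hpath : IsPathL gs gr v l := by
      refine ⟨?_, ?_⟩
      · intro x hx
        rcases eq_or_ne l [] with hnil | hne
        · rw [hnil] at hx; cases hx
        · rw [List.head?_eq_head hne] at hx
          obtain rfl : l.head hne = x := by simpa using hx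
          have h0 : 0 < n₀ := by rw [← hlen]; exact List.length_pos_iff.mpr hne
          rw [← List.getElem_zero (by rw [hlen]; omega)]
          exact (hgs 0 (by omega)).trans rfl
      · refine List.isChain_iff_getElem.mpr ?_
        intro t ht
        rw [hlen] at ht
        rw [hgr t (by omega), hgs (t+1) (by omega)]
    have hrng : pathRng gr v l = vtx gs gr v n₀ := by
      rcases Nat.eq_zero_or_pos n₀ with h0 | h0
      · have : l = [] := by rw [← List.length_eq_zero_iff, hlen, h0]
        rw [this, h0]
        rfl
      · have hne : l ≠ [] := by
          intro hc; rw [hc] at hlen; simp at hlen; omega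
        rw [pathRng_ne_nil v hne, List.getLast_eq_getElem]
        have := hgr (n₀ - 1) (by omega)
        rw [getElem_congr' (show l.length - 1 = n₀ - 1 by omega) (by omega)]
        rw [this]
        congr 1
        omega
    have hbd : IsBoundary gs gr (.inl (v, l)) := by
      refine ⟨hpath, ?_⟩
      rw [hrng]
      exact nxt_none hspec
    exact ⟨⟨.inl (v, l), hbd⟩, rfl⟩

lemma exists_cons (e : E) (y : BPath gs gr) (hy : srcB gs gr y = gr e) :
    ∃ x : BPath gs gr, srcB gs gr x = gs e ∧ edgeAt gs gr 0 x = some e ∧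
      ∀ k, edgeAt gs gr (k+1) x = edgeAt gs gr k y := by
  obtain ⟨y1, hb⟩ := y
  rcases y1 with ⟨w, l⟩ | f
  · have hb' : IsPathL gs gr w l ∧ ¬ RegularVert gs (pathRng gr w l) := hb
    have hw : w = gr e := hy
    subst hw
    have hbd : IsBoundary gs gr (.inl (gs e, e :: l)) := by
      refine ⟨isPathL_cons.mpr ⟨rfl, hb'.1⟩, ?_⟩
      show ¬ RegularVert gs (pathRng gr (gs e) (e :: l))
      exact hb'.2
    refine ⟨⟨.inl (gs e, e :: l), hbd⟩, rfl, ?_, fun k => ?_⟩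
    · show (e :: l)[0]? = some e
      simp
    · show (e :: l)[k+1]? = l[k]?
      simp
  · have hb' : ∀ n, gr (f n) = gs (f (n + 1)) := hb
    have hw : gs (f 0) = gr e := hy
    set g : ℕ → E := fun n => match n with | 0 => e | n+1 => f n with hg
    have hbd : IsBoundary gs gr (.inr g) := by
      intro n
      cases n with
      | zero => exact hw.symm
      | succ n => exact hb' n
    exact ⟨⟨.inr g, hbd⟩, rfl, rfl, fun k => rfl⟩

lemma exists_bpath_pre (w : V) (p : List E) (hp : IsPathL gs gr w p) :
    ∃ x : BPath gs gr, srcB gs gr x = w ∧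
      ∀ k (hk : k < p.length), edgeAt gs gr k x = some (p[k]'hk) := by
  induction p generalizing w with
  | nil =>
    obtain ⟨x, hx⟩ := exists_bpath (gr := gr) w
    exact ⟨x, hx, fun k hk => by simp at hk⟩
  | cons e p ih =>
    rw [isPathL_cons] at hp
    obtain ⟨x0, hsrc, hedge⟩ := ih (gr e) hp.2
    obtain ⟨x, hxsrc, hx0, hxs⟩ := exists_cons e x0 hsrc
    refine ⟨x, by rw [hxsrc, hp.1], ?_⟩
    intro k hk
    cases k with
    | zero => simpa using hx0
    | succ k =>
      rw [hxs k, hedge k (by simpa using hk)]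
      simp

def rep (l : List E) : ℕ → List E
  | 0 => []
  | n+1 => l ++ rep l n

lemma rep_length (l : List E) : ∀ n, (rep l n).length = n * l.length := by
  intro n
  induction n with
  | zero => simp [rep]
  | succ n ih => simp [rep, ih, Nat.succ_mul]; omega

lemma rep_path {v : V} {l : List E} (h : IsPathL gs gr v l) (hc : pathRng gr v l = v) :
    ∀ n, IsPathL gs gr v (rep l n) ∧ pathRng gr v (rep l n) = v := by
  intro n
  induction n with
  | zero => exact ⟨⟨by simp [rep], List.isChain_nil⟩, rfl⟩
  | succ n ih =>
    refine ⟨path_append h (by rw [hc]; exact ih.1), ?_⟩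
    show pathRng gr v (l ++ rep l n) = v
    rw [pathRng_append, hc, ih.2]

lemma rep_getElem {l : List E} (hl : 0 < l.length) : ∀ n q (hq : q < n * l.length),
    (rep l n)[q]'(by rw [rep_length]; exact hq) =
      l[q % l.length]'(Nat.mod_lt _ hl) := by
  intro n
  induction n with
  | zero => intro q hq; simp at hq
  | succ n ih =>
    intro q hq
    show (l ++ rep l n)[q]'_ = _
    rcases lt_or_ge q l.length with hql | hql
    · refine (List.getElem_append_left hql).trans ?_
      exact getElem_congr' (Nat.mod_eq_of_lt hql).symm _
    · have h1 : q - l.length < n * l.length := by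
        have h4 : (n + 1) * l.length = n * l.length + l.length := by ring
        omega
      have e3 : (rep l n).length = n * l.length := rep_length l n
      refine (List.getElem_append_right (by omega)).trans ?_
      have h2 := ih (q - l.length) h1
      rw [h2]
      exact getElem_congr' (Nat.mod_eq_sub_mod hql).symm _

lemma not_finite_of_exit {v : V} {l : List E} (hcyc : IsCycleP gs gr v l) {e a : E}
    (ha : a ∈ l) (hgs : gs e = gs a) (hne : e ≠ a) : ¬ Finite (BPath gs gr) := by
  intro hfin
  obtain ⟨l₁, l₂, rfl⟩ := List.append_of_mem ha
  set L := (l₁ ++ a :: l₂).length with hLdef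
  set L₁ := l₁.length with hL₁def
  have hL : L₁ < L := by
    simp only [hLdef, hL₁def, List.length_append, List.length_cons]
    omega
  have hal : gs a = pathRng gr v l₁ := by
    rcases eq_or_ne l₁ [] with rfl | h1
    · have := hcyc.1.1 a (by simp)
      simpa [pathRng] using this
    · rw [pathRng_ne_nil v h1]
      have hch := List.isChain_append.mp hcyc.1.2
      have hmem1 : l₁.getLast h1 ∈ l₁.getLast? := by
        rw [List.getLast?_eq_getLast h1]; rfl
      have hmem2 : a ∈ (a :: l₂).head? := rfl
      exact (hch.2.2 _ hmem1 a hmem2).symm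
  have hpe : IsPathL gs gr v (l₁ ++ [e]) := by
    refine path_append (path_prefix hcyc.1 ⟨a :: l₂, rfl⟩) ?_
    exact ⟨by simpa using hgs.trans hal, List.isChain_singleton e⟩
  have hrep := rep_path hcyc.1 hcyc.2.2.1
  set p : ℕ → List E := fun n => rep (l₁ ++ a :: l₂) n ++ (l₁ ++ [e]) with hp
  have hpath : ∀ n, IsPathL gs gr v (p n) :=
    fun n => path_append (hrep n).1 (by rw [(hrep n).2]; exact hpe)
  have hplen : ∀ n, (p n).length = n * L + (L₁ + 1) := by
    intro n
    simp [hp, rep_length, hLdef, hL₁def]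
  have getl : ∀ {l l' : List E} (h : l = l') {i : ℕ} (hi : i < l.length),
      l[i]'hi = l'[i]'(h ▸ hi) := by
    intro l l' h i hi
    subst h
    rfl
  have hpq : ∀ n, (p n)[n * L + L₁]'(by rw [hplen]; omega) = e := by
    intro n
    have hassoc : p n = (rep (l₁ ++ a :: l₂) n ++ l₁) ++ [e] := by simp [hp]
    have hlen2 : (rep (l₁ ++ a :: l₂) n ++ l₁).length = n * L + L₁ := by
      simp [rep_length, ← hLdef, ← hL₁def]
    rw [getl hassoc _]
    exact List.getElem_concat_length hlen2.symm _
  have hpq2 : ∀ n m, ∀ (hnm : n < m), (p m)[n * L + L₁]'(by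
      rw [hplen]
      have h5 : (n+1) * L ≤ m * L := Nat.mul_le_mul_right L hnm
      have h6 : (n+1) * L = n * L + L := by ring
      omega) = a := by
    intro n m hnm
    have h5 : (n+1) * L ≤ m * L := Nat.mul_le_mul_right L hnm
    have h6 : (n+1) * L = n * L + L := by ring
    have hidx : n * L + L₁ < (rep (l₁ ++ a :: l₂) m).length := by
      rw [rep_length, ← hLdef]
      omega
    show (rep (l₁ ++ a :: l₂) m ++ (l₁ ++ [e]))[n * L + L₁]'_ = a
    rw [List.getElem_append_left hidx]
    rw [rep_getElem (by simp) m _ (by rw [rep_length] at hidx; exact hidx)]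
    have hmod : (n * L + L₁) % (l₁ ++ a :: l₂).length = L₁ := by
      rw [← hLdef, Nat.mul_comm n L, Nat.mul_add_mod, Nat.mod_eq_of_lt hL]
    rw [getElem_congr' hmod (Nat.mod_lt _ (by simp))]
    rw [List.getElem_append_right (by omega)]
    rw [getElem_congr' (show L₁ - l₁.length = 0 by omega) (by rw [hL₁def]; simp)]
    rfl
  choose x hsrc hedge using fun n => exists_bpath_pre v (p n) (hpath n)
  have hkey : ∀ n m, n < m → x n ≠ x m := by
    intro n m hnm hxeq
    have e3 : (some ((p n)[n * L + L₁]'(by rw [hplen]; omega)) : Option E) =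
        some ((p m)[n * L + L₁]'(by
          rw [hplen]
          have h5 : (n+1) * L ≤ m * L := Nat.mul_le_mul_right L hnm
          have h6 : (n+1) * L = n * L + L := by ring
          omega)) := by
      rw [← hedge n _ _, ← hedge m _ _, hxeq]
    have h7 : e = a := by
      have h1 := hpq n
      have h2 := hpq2 n m hnm
      exact h1.symm.trans ((Option.some.inj e3).trans h2)
    exact hne h7
  have hinj : Function.Injective x := by
    intro n m hnm
    by_contra hne'
    rcases lt_trichotomy n m with h | h | h
    · exact hkey n m h hnm
    · exact hne' h
    · exact hkey m n h hnm.symm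
  have := Finite.of_injective x hinj
  exact not_finite ℕ

end Part4

end BPF

/-- The unit space `G_E⁰` (the boundary path space `X`) of the graph
groupoid of a directed graph `E` is finite if and only if `E` is a finite graph with
no cycle having an exit. -/
theorem boundary_path_space_finite_iff {V E : Type*} (gs gr : E → V) :
    Finite (BPath gs gr) ↔
      (Finite V ∧ Finite E ∧ ∀ (v : V) (l : List E), IsCycleP gs gr v l →
        ¬ HasExitP gs l) := by
  constructor
  · intro h
    refine ⟨?_, ?_, ?_⟩
    · exact Finite.of_surjective (BPF.srcB gs gr) (fun v => BPF.exists_bpath v)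
    · have hex : ∀ e : E, ∃ x : BPath gs gr, BPF.edgeAt gs gr 0 x = some e := by
        intro e
        obtain ⟨y, hy⟩ := BPF.exists_bpath (gs := gs) (gr := gr) (gr e)
        obtain ⟨x, _, h0, _⟩ := BPF.exists_cons e y hy
        exact ⟨x, h0⟩
      choose F hF using hex
      have hinj : Function.Injective F := by
        intro a b hab
        have h1 := hF a
        rw [hab, hF b] at h1
        exact (Option.some.inj h1).symm
      exact Finite.of_injective F hinj
    · intro v l hcyc hexit
      obtain ⟨e, a, ha, hgs, hne⟩ := hexit
      exact BPF.not_finite_of_exit hcyc ha hgs hne h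
  · rintro ⟨hV, hE, hnoexit⟩
    exact BPF.bpath_finite hnoexit
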